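/- arXiv:1603.05028 — 2 statements merged into one kernel-verified Lean document; each statement's English description precedes it below -/
import Mathlib

section
/- Let V be a differential algebra with derivation ∂, equipped with a λ-bracket satisfying sesquilinearity, skew-symmetry, and the Jacobi identity (i.e., V is a Poisson vertex algebra). Then the operation {∫f, ∫g} := ∫({f_λ g}|_{λ=0}) is well defined on the quotient space V/∂V (i.e., it is independent of the choice of representatives f, g modulo ∂V) and makes V/∂V into a Lie algebra. -/
open Polynomial

section LambdaBracket

variable {F V : Type*} [Field F] [CharZero F] [CommRing V] [Algebra F V]

/-- Apply a derivation coefficientwise to a `λ`-polynomial. -/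
noncomputable def dCoeff (der : V →ₗ[F] V) (p : Polynomial V) : Polynomial V :=
  p.sum fun n c => Polynomial.C (der c) * Polynomial.X ^ n

/-- The operator `λ + ∂` on `λ`-polynomials. -/
noncomputable def opS (der : V →ₗ[F] V) (p : Polynomial V) : Polynomial V :=
  Polynomial.X * p + dCoeff der p

/-- The operator `-λ - ∂` on `λ`-polynomials. -/
noncomputable def opT (der : V →ₗ[F] V) (p : Polynomial V) : Polynomial V :=
  -(Polynomial.X * p) - dCoeff der p

/-- Given `{f_λ g} = Σ_n c_n λ^n`, this is `{f_{-λ-∂} g} = Σ_n (-λ-∂)^n c_n`. -/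
noncomputable def negSubst (der : V →ₗ[F] V) (p : Polynomial V) : Polynomial V :=
  p.sum fun n c => (opT der)^[n] (Polynomial.C c)

/-- The left-hand side of the Jacobi identity
`{f_λ {g_μ h}} - {g_μ {f_λ h}} - {{f_λ g}_{λ+μ} h}`, as an element of
`V[λ][μ]` (outer variable `μ`, inner variable `λ`). -/
noncomputable def jacobiLHS (B : V →ₗ[F] V →ₗ[F] Polynomial V) (f g h : V) :
    Polynomial (Polynomial V) :=
  (B g h).sum (fun m c => Polynomial.C (B f c) * Polynomial.X ^ m)
  - (B f h).sum (fun n c => (B g c).sum fun m d =>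
      Polynomial.C (Polynomial.C d * Polynomial.X ^ n) * Polynomial.X ^ m)
  - (B f g).sum (fun n c => (B c h).sum fun k d =>
      Polynomial.C (Polynomial.C d * Polynomial.X ^ n) *
        (Polynomial.C Polynomial.X + Polynomial.X) ^ k)

end LambdaBracket


section AuxHelpers

open Polynomial

lemma collapse0 {V W : Type*} [Semiring V] [AddCommMonoid W] (p : Polynomial V)
    (phi : V → W) (hphi : phi 0 = 0) :
    (p.sum fun n c => if n = 0 then phi c else 0) = phi (p.coeff 0) := by
  rw [Polynomial.sum_def, Finset.sum_ite_eq' p.support 0 (fun n => phi (p.coeff n))]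
  by_cases h0 : (0 : ℕ) ∈ p.support
  · simp [h0]
  · simp [h0, Polynomial.notMem_support_iff.mp h0, hphi]

lemma coeff0_sum_CX {V W : Type*} [Semiring V] [Semiring W] (p : Polynomial V)
    (g : V → W) (hg : g 0 = 0) :
    (p.sum fun n c => Polynomial.C (g c) * Polynomial.X ^ n).coeff 0 = g (p.coeff 0) := by
  rw [Polynomial.coeff_sum]
  have key : ∀ (n : ℕ) (c : V),
      (Polynomial.C (g c) * Polynomial.X ^ n).coeff 0 = if n = 0 then g c else 0 := by
    intro n c
    rcases Nat.eq_zero_or_pos n with rfl | hn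
    · simp
    · simp [Polynomial.coeff_C_mul, Polynomial.coeff_X_pow, hn.ne', hn.ne]
  simp only [key]
  exact collapse0 p g hg

lemma coeff0_dCoeff {F V : Type*} [Field F] [CharZero F] [CommRing V] [Algebra F V]
    (der : V →ₗ[F] V) (q : Polynomial V) :
    (dCoeff der q).coeff 0 = der (q.coeff 0) :=
  coeff0_sum_CX q (fun c => der c) (map_zero der)

lemma coeff0_opT {F V : Type*} [Field F] [CharZero F] [CommRing V] [Algebra F V]
    (der : V →ₗ[F] V) (q : Polynomial V) :
    (opT der q).coeff 0 = -der (q.coeff 0) := by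
  rw [opT, Polynomial.coeff_sub, Polynomial.coeff_neg, Polynomial.mul_coeff_zero,
    Polynomial.coeff_X_zero, zero_mul, neg_zero, zero_sub, coeff0_dCoeff]

lemma opT_iter {F V : Type*} [Field F] [CharZero F] [CommRing V] [Algebra F V]
    (der : V →ₗ[F] V) (n : ℕ) (c : V) :
    ∃ w, ((opT der)^[n] (Polynomial.C c)).coeff 0 = (if n = 0 then c else 0) + der w := by
  induction n with
  | zero => exact ⟨0, by simp⟩
  | succ n ih =>
    refine ⟨-(((opT der)^[n] (Polynomial.C c)).coeff 0), ?_⟩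
    rw [Function.iterate_succ_apply', coeff0_opT, map_neg, if_neg (Nat.succ_ne_zero n)]
    ring

end AuxHelpers

/-- If `(V, ∂)` is a differential algebra with a `λ`-bracket `B`
satisfying sesquilinearity, the Leibniz rules, skew-symmetry and the Jacobi
identity (i.e. `V` is a Poisson vertex algebra), then
`{∫f, ∫g} := ∫({f_λ g}|_{λ=0})` is well defined on `V/∂V` and makes `V/∂V`
a Lie algebra (skew-symmetry and the Jacobi identity hold modulo `∂V`). -/
theorem pva_quotient_lie_algebra
    (F V : Type*) [Field F] [CharZero F] [CommRing V] [Algebra F V]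
    (der : V →ₗ[F] V)
    (hder : ∀ a b : V, der (a * b) = a * der b + der a * b)
    (B : V →ₗ[F] V →ₗ[F] Polynomial V)
    (hsesq1 : ∀ f g : V, B (der f) g = -(Polynomial.X * B f g))
    (hsesq2 : ∀ f g : V, B f (der g) = opS der (B f g))
    (hlleib : ∀ f g h : V,
      B f (g * h) = B f g * Polynomial.C h + B f h * Polynomial.C g)
    (hrleib : ∀ f g h : V, B (f * h) g =
      (B f g).sum (fun n c => Polynomial.C c * (opS der)^[n] (Polynomial.C h)) +
      (B h g).sum (fun n c => Polynomial.C c * (opS der)^[n] (Polynomial.C f)))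
    (hskew : ∀ f g : V, B g f = -negSubst der (B f g))
    (hjac : ∀ f g h : V, jacobiLHS B f g h = 0) :
    -- well-definedness on V/∂V
    (∀ f f' g g' : V, f - f' ∈ LinearMap.range der → g - g' ∈ LinearMap.range der →
      (B f g).coeff 0 - (B f' g').coeff 0 ∈ LinearMap.range der) ∧
    -- skew-symmetry of the induced bracket on V/∂V
    (∀ f g : V, (B f g).coeff 0 + (B g f).coeff 0 ∈ LinearMap.range der) ∧
    -- Jacobi identity of the induced bracket on V/∂V
    (∀ f g h : V,
      (B f ((B g h).coeff 0)).coeff 0 - (B ((B f g).coeff 0) h).coeff 0 -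
        (B g ((B f h).coeff 0)).coeff 0 ∈ LinearMap.range der) := by
  classical
  refine ⟨?_, ?_, ?_⟩
  · -- well-definedness
    intro f f' g g' hf hg
    obtain ⟨a, ha⟩ := hf
    obtain ⟨b, hb⟩ := hg
    have h1 : (B (f - f') g).coeff 0 = 0 := by
      rw [← ha, hsesq1, Polynomial.coeff_neg, Polynomial.mul_coeff_zero,
        Polynomial.coeff_X_zero, zero_mul, neg_zero]
    have h2 : (B f' (g - g')).coeff 0 = der ((B f' b).coeff 0) := by
      rw [← hb, hsesq2, opS, Polynomial.coeff_add, Polynomial.mul_coeff_zero,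
        Polynomial.coeff_X_zero, zero_mul, zero_add, coeff0_dCoeff]
    have e : (B f g).coeff 0 - (B f' g').coeff 0 =
        (B (f - f') g).coeff 0 + (B f' (g - g')).coeff 0 := by
      rw [← Polynomial.coeff_add, ← Polynomial.coeff_sub]
      congr 1
      simp only [map_sub, LinearMap.sub_apply]
      ring
    refine ⟨(B f' b).coeff 0, ?_⟩
    rw [e, h1, h2, zero_add]
  · -- skew-symmetry
    intro f g
    set p := B f g with hp
    have hbs : (B g f).coeff 0 = -((negSubst der p).coeff 0) := by
      rw [hskew, Polynomial.coeff_neg]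
    have hns : (negSubst der p).coeff 0 =
        ∑ n ∈ p.support, ((opT der)^[n] (Polynomial.C (p.coeff n))).coeff 0 := by
      rw [negSubst, Polynomial.coeff_sum, Polynomial.sum_def]
    have hc0 : p.coeff 0 = ∑ n ∈ p.support, (if n = 0 then p.coeff n else 0) := by
      rw [Finset.sum_ite_eq' p.support 0 (fun n => p.coeff n)]
      by_cases h0 : (0 : ℕ) ∈ p.support
      · simp [h0]
      · simp [h0, Polynomial.notMem_support_iff.mp h0]
    have key : p.coeff 0 + (B g f).coeff 0 =
        ∑ n ∈ p.support, ((if n = 0 then p.coeff n else 0)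
          - ((opT der)^[n] (Polynomial.C (p.coeff n))).coeff 0) := by
      rw [Finset.sum_sub_distrib, ← hc0, ← hns, hbs, sub_eq_add_neg]
    rw [key]
    refine Submodule.sum_mem _ fun n _ => ?_
    obtain ⟨w, hw⟩ := opT_iter der n (p.coeff n)
    refine ⟨-w, ?_⟩
    rw [hw, map_neg]
    ring
  · -- Jacobi identity
    intro f g h
    have hz := congrArg (fun q : Polynomial (Polynomial V) => (q.coeff 0).coeff 0) (hjac f g h)
    simp only [jacobiLHS, Polynomial.coeff_sub, Polynomial.coeff_zero,
      Polynomial.coeff_sum] at hz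
    -- pointwise computations
    have pt1 : ∀ (m : ℕ) (c : V),
        ((Polynomial.C (B f c) * Polynomial.X ^ m).coeff 0).coeff 0
          = if m = 0 then (B f c).coeff 0 else 0 := by
      intro m c
      rcases Nat.eq_zero_or_pos m with rfl | hm
      · simp
      · simp [Polynomial.coeff_C_mul, Polynomial.coeff_X_pow, hm.ne, hm.ne']
    have pt2 : ∀ (n m : ℕ) (d : V),
        ((Polynomial.C (Polynomial.C d * Polynomial.X ^ n) * Polynomial.X ^ m
          : Polynomial (Polynomial V)).coeff 0).coeff 0
          = if m = 0 then (if n = 0 then d else 0) else 0 := by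
      intro n m d
      rw [Polynomial.coeff_C_mul, Polynomial.coeff_X_pow]
      rcases Nat.eq_zero_or_pos m with rfl | hm
      · rw [if_pos rfl, if_pos rfl, mul_one, Polynomial.coeff_C_mul,
          Polynomial.coeff_X_pow]
        rcases Nat.eq_zero_or_pos n with rfl | hn
        · simp
        · rw [if_neg hn.ne, mul_zero, if_neg hn.ne']
      · rw [if_neg (by omega), mul_zero, Polynomial.coeff_zero, if_neg hm.ne']
    have pt3 : ∀ (n k : ℕ) (d : V),
        ((Polynomial.C (Polynomial.C d * Polynomial.X ^ n) *
            (Polynomial.C Polynomial.X + Polynomial.X) ^ k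
          : Polynomial (Polynomial V)).coeff 0).coeff 0
          = if n + k = 0 then d else 0 := by
      intro n k d
      have h1 : ((Polynomial.C (Polynomial.C d * Polynomial.X ^ n) *
            (Polynomial.C Polynomial.X + Polynomial.X) ^ k
          : Polynomial (Polynomial V)).coeff 0)
          = Polynomial.C d * Polynomial.X ^ (n + k) := by
        rw [← Polynomial.constantCoeff_apply, map_mul, map_pow, map_add]
        simp only [Polynomial.constantCoeff_apply, Polynomial.coeff_C_zero,
          Polynomial.coeff_X_zero, add_zero]
        ring
      rw [h1, Polynomial.coeff_C_mul, Polynomial.coeff_X_pow]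
      rcases Nat.eq_zero_or_pos (n + k) with h | h
      · simp [h]
      · simp [h.ne, h.ne']
        intro hn hk
        exact absurd (by omega : n + k = 0) h.ne'
    simp only [pt1, pt2, pt3] at hz
    -- collapse the sums
    have c1 : ((B g h).sum fun m c => if m = 0 then (B f c).coeff 0 else 0)
        = (B f ((B g h).coeff 0)).coeff 0 :=
      collapse0 (B g h) (fun c => (B f c).coeff 0) (by simp)
    have c2i : ∀ (n : ℕ) (c : V),
        ((B g c).sum fun m d => if m = 0 then (if n = 0 then d else 0) else 0)
          = if n = 0 then (B g c).coeff 0 else 0 := by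
      intro n c
      rcases Nat.eq_zero_or_pos n with rfl | hn
      · simpa using collapse0 (B g c) (fun d => d) rfl
      · simp [hn.ne', Polynomial.sum_def]
    have c2 : ((B f h).sum fun n c =>
        (B g c).sum fun m d => if m = 0 then (if n = 0 then d else 0) else 0)
        = (B g ((B f h).coeff 0)).coeff 0 := by
      simp only [c2i]
      exact collapse0 (B f h) (fun c => (B g c).coeff 0) (by simp)
    have c3i : ∀ (n : ℕ) (c : V),
        ((B c h).sum fun k d => if n + k = 0 then d else 0)
          = if n = 0 then (B c h).coeff 0 else 0 := by
      intro n c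
      rcases Nat.eq_zero_or_pos n with rfl | hn
      · simpa using collapse0 (B c h) (fun d => d) rfl
      · have : ∀ (k : ℕ) (d : V), (if n + k = 0 then d else 0) = 0 := by
          intro k d; rw [if_neg (by omega)]
        simp only [this]
        simp [Polynomial.sum_def, hn.ne']
    have c3 : ((B f g).sum fun n c =>
        (B c h).sum fun k d => if n + k = 0 then d else 0)
        = (B ((B f g).coeff 0) h).coeff 0 := by
      simp only [c3i]
      exact collapse0 (B f g) (fun c => (B c h).coeff 0) (by simp)
    rw [c1, c2, c3] at hz
    refine ⟨0, ?_⟩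
    rw [map_zero]
    linear_combination -hz
end

section
/- Let V be an algebra of differential functions in variables u_1,…,u_ℓ and let H_{ij}(λ) ∈ F[λ]⊗V. Then the λ-bracket defined by the Master Formula {f_λ g} = Σ_{i,j,m,n} (∂g/∂u_j^{(n)}) (λ+∂)^n H_{ji}(λ+∂) (-λ-∂)^m (∂f/∂u_i^{(m)}) satisfies the sesquilinearity axioms {∂f_λ g} = -λ{f_λ g} and {f_λ ∂g} = (λ+∂){f_λ g}, and the left and right Leibniz rules, and moreover {u_i_λ u_j} = H_{ji}(λ). -/
open Polynomial

section LambdaBracket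

variable {F V : Type*} [Field F] [CharZero F] [CommRing V] [Algebra F V]

/-- The Master Formula: given partial derivatives `Dp i n = ∂/∂u_i^{(n)}` and a
matrix `H` (with `{u_i λ u_j} = H j i`),
`{f_λ g} = Σ_{i,j,m,n} (∂g/∂u_j^{(n)}) (λ+∂)^n H_{ji}(λ+∂) (-λ-∂)^m (∂f/∂u_i^{(m)})`. -/
noncomputable def masterFormula {ℓ : ℕ} (der : V →ₗ[F] V)
    (Dp : Fin ℓ → ℕ → (V →ₗ[F] V)) (H : Fin ℓ → Fin ℓ → Polynomial V)
    (f g : V) : Polynomial V :=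
  ∑ᶠ (i : Fin ℓ), ∑ᶠ (j : Fin ℓ), ∑ᶠ (m : ℕ), ∑ᶠ (n : ℕ),
    Polynomial.C (Dp j n g) *
      (opS der)^[n] ((H j i).sum fun p c =>
        Polynomial.C c * (opS der)^[p] ((opT der)^[m] (Polynomial.C (Dp i m f))))

end LambdaBracket

section MFAux

open Polynomial Function

set_option linter.unusedSectionVars false

variable {F V : Type*} [Field F] [CharZero F] [CommRing V] [Algebra F V]
variable (der : V →ₗ[F] V)

lemma dCoeff_coeff (p : Polynomial V) (k : ℕ) :
    (dCoeff der p).coeff k = der (p.coeff k) := by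
  rw [dCoeff, coeff_sum, Polynomial.sum_def]
  simp only [coeff_C_mul, coeff_X_pow, mul_ite, mul_one, mul_zero]
  by_cases hk : k ∈ p.support
  · rw [Finset.sum_eq_single_of_mem k hk (fun b _ hb => by simp [Ne.symm hb])]
    simp
  · rw [Finset.sum_eq_zero fun b hb => by
      have : k ≠ b := fun h => hk (h ▸ hb)
      simp [this]]
    rw [Polynomial.notMem_support_iff.mp hk, map_zero]

lemma dCoeff_add (p q : Polynomial V) :
    dCoeff der (p + q) = dCoeff der p + dCoeff der q := by
  ext k; simp [dCoeff_coeff]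

lemma dCoeff_zero : dCoeff der (0 : Polynomial V) = 0 := by
  ext k; simp [dCoeff_coeff]

lemma dCoeff_C (a : V) : dCoeff der (C a) = C (der a) := by
  ext k; simp [dCoeff_coeff, coeff_C, apply_ite der]

lemma dCoeff_monomial (n : ℕ) (a : V) :
    dCoeff der (monomial n a) = monomial n (der a) := by
  ext k; simp [dCoeff_coeff, coeff_monomial, apply_ite der]

lemma dCoeff_X_mul (p : Polynomial V) :
    dCoeff der (X * p) = X * dCoeff der p := by
  ext k
  cases k with
  | zero => simp [dCoeff_coeff, Polynomial.mul_coeff_zero]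
  | succ k => simp [dCoeff_coeff, Polynomial.coeff_X_mul]

lemma dCoeff_C_mul (hder : ∀ a b : V, der (a * b) = a * der b + der a * b)
    (b : V) (w : Polynomial V) :
    dCoeff der (C b * w) = C (der b) * w + C b * dCoeff der w := by
  ext k
  simp only [dCoeff_coeff, coeff_C_mul, coeff_add, hder]
  ring

/-- `opS der` as an additive monoid hom. -/
noncomputable def opSHom : Polynomial V →+ Polynomial V :=
  AddMonoidHom.mk' (opS der) (by
    intro p q
    simp only [opS, dCoeff_add]
    ring)

lemma opS_eq_hom (p : Polynomial V) : opS der p = opSHom der p := rfl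

lemma opS_add (p q : Polynomial V) :
    opS der (p + q) = opS der p + opS der q := map_add (opSHom der) p q

lemma opS_zero : opS der (0 : Polynomial V) = 0 := map_zero (opSHom der)

lemma opS_neg (p : Polynomial V) : opS der (-p) = -opS der p :=
  map_neg (opSHom der) p

lemma opS_X_mul (p : Polynomial V) : opS der (X * p) = X * opS der p := by
  simp only [opS, dCoeff_X_mul]
  ring

lemma opS_C_mul (hder : ∀ a b : V, der (a * b) = a * der b + der a * b)
    (b : V) (w : Polynomial V) :
    opS der (C b * w) = C b * opS der w + C (der b) * w := by
  simp only [opS, dCoeff_C_mul der hder]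
  ring

lemma opT_eq (p : Polynomial V) : opT der p = -opS der p := by
  simp only [opT, opS]; ring

lemma opS_monomial (n : ℕ) (a : V) :
    opS der (monomial n a) = monomial (n + 1) a + monomial n (der a) := by
  rw [opS, dCoeff_monomial]
  congr 1
  rw [← C_mul_X_pow_eq_monomial, ← C_mul_X_pow_eq_monomial, pow_succ]
  ring

lemma iterS_zero (n : ℕ) : (opS der)^[n] (0 : Polynomial V) = 0 :=
  Function.iterate_fixed (opS_zero der) n

lemma iterS_add (n : ℕ) (p q : Polynomial V) :
    (opS der)^[n] (p + q) = (opS der)^[n] p + (opS der)^[n] q := by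
  induction n generalizing p q with
  | zero => simp
  | succ n ih => simp [Function.iterate_succ_apply', ih, opS_add]

lemma iterS_neg (n : ℕ) (p : Polynomial V) :
    (opS der)^[n] (-p) = -(opS der)^[n] p := by
  induction n generalizing p with
  | zero => simp
  | succ n ih => simp [Function.iterate_succ_apply', ih, opS_neg]

lemma iterS_X_mul (n : ℕ) (p : Polynomial V) :
    (opS der)^[n] (X * p) = X * (opS der)^[n] p := by
  induction n generalizing p with
  | zero => simp
  | succ n ih => simp [Function.iterate_succ_apply', ih, opS_X_mul]

lemma iterT_zero (n : ℕ) : (opT der)^[n] (0 : Polynomial V) = 0 :=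
  Function.iterate_fixed (by simp [opT_eq, opS_zero]) n

lemma iterT_add (n : ℕ) (p q : Polynomial V) :
    (opT der)^[n] (p + q) = (opT der)^[n] p + (opT der)^[n] q := by
  induction n generalizing p q with
  | zero => simp
  | succ n ih =>
    simp only [Function.iterate_succ_apply', ih, opT_eq, opS_add]
    abel

lemma iterT_X_mul (n : ℕ) (p : Polynomial V) :
    (opT der)^[n] (X * p) = X * (opT der)^[n] p := by
  induction n generalizing p with
  | zero => simp
  | succ n ih =>
    simp [Function.iterate_succ_apply', ih, opT_eq, opS_X_mul]

end MFAux

section MFAux2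

open Polynomial Function

set_option linter.unusedSectionVars false

variable {F V : Type*} [Field F] [CharZero F] [CommRing V] [Algebra F V]
variable {der : V →ₗ[F] V}
variable (der)

/-- The "inner sum" `Q(λ+∂) x`: behaves additively in `x`. -/
lemma innerSum_zero (Q : Polynomial V) :
    (Q.sum fun p c => C c * (opS der)^[p] (0 : Polynomial V)) = 0 := by
  simp [Polynomial.sum_def, iterS_zero]

lemma innerSum_add (Q : Polynomial V) (x y : Polynomial V) :
    (Q.sum fun p c => C c * (opS der)^[p] (x + y)) =
      (Q.sum fun p c => C c * (opS der)^[p] x) +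
      (Q.sum fun p c => C c * (opS der)^[p] y) := by
  simp [Polynomial.sum_def, iterS_add, mul_add, Finset.sum_add_distrib]

lemma innerSum_neg (Q : Polynomial V) (x : Polynomial V) :
    (Q.sum fun p c => C c * (opS der)^[p] (-x)) =
      -(Q.sum fun p c => C c * (opS der)^[p] x) := by
  simp [Polynomial.sum_def, iterS_neg, mul_neg, Finset.sum_neg_distrib]

lemma innerSum_X_mul (Q : Polynomial V) (x : Polynomial V) :
    (Q.sum fun p c => C c * (opS der)^[p] (X * x)) =
      X * (Q.sum fun p c => C c * (opS der)^[p] x) := by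
  simp [Polynomial.sum_def, iterS_X_mul, Finset.mul_sum, mul_left_comm]

lemma iterS_C_one (hder : ∀ a b : V, der (a * b) = a * der b + der a * b)
    (p : ℕ) : (opS der)^[p] (C (1 : V)) = X ^ p := by
  have h1 : der 1 = 0 := by
    have h := hder 1 1
    simp only [one_mul, mul_one] at h
    exact (right_eq_add.mp h)
  induction p with
  | zero => simp
  | succ p ih =>
    rw [Function.iterate_succ_apply', ih]
    have : (X : Polynomial V) ^ p = monomial p 1 := by
      rw [← C_mul_X_pow_eq_monomial, C_1, one_mul]
    rw [this, opS_monomial, h1, monomial_zero_right, add_zero,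
      ← C_mul_X_pow_eq_monomial, C_1, one_mul]

/-- Evaluation `P(λ+∂) h` as an additive monoid hom in `P`. -/
noncomputable def evH (der : V →ₗ[F] V) (h : V) : Polynomial V →+ Polynomial V :=
  AddMonoidHom.mk' (fun P => P.sum fun n c => C c * (opS der)^[n] (C h))
    (fun p q => Polynomial.sum_add_index p q
      (fun n c => C c * (opS der)^[n] (C h))
      (fun i => by simp) (fun a b₁ b₂ => by simp [add_mul]))

lemma evH_apply (h : V) (P : Polynomial V) :
    evH der h P = P.sum fun n c => C c * (opS der)^[n] (C h) := rfl

lemma evH_monomial (h : V) (n : ℕ) (a : V) :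
    evH der h (monomial n a) = C a * (opS der)^[n] (C h) := by
  rw [evH_apply, Polynomial.sum_monomial_index _ _ (by simp)]

lemma evH_C (h a : V) : evH der h (C a) = C (a * h) := by
  rw [← monomial_zero_left, evH_monomial, Function.iterate_zero_apply, ← C_mul]

lemma evH_C_mul (h b : V) (Q : Polynomial V) :
    evH der h (C b * Q) = C b * evH der h Q := by
  induction Q using Polynomial.induction_on' with
  | add p q hp hq => rw [mul_add, map_add, hp, hq, map_add, mul_add]
  | monomial n a =>
    rw [C_mul_monomial, evH_monomial, evH_monomial, C_mul, mul_assoc]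

lemma evH_opS (hder : ∀ a b : V, der (a * b) = a * der b + der a * b)
    (h : V) (Q : Polynomial V) :
    evH der h (opS der Q) = opS der (evH der h Q) := by
  induction Q using Polynomial.induction_on' with
  | add p q hp hq => rw [opS_add, map_add, hp, hq, map_add, opS_add]
  | monomial n a =>
    rw [opS_monomial, map_add, evH_monomial, evH_monomial, evH_monomial,
      opS_C_mul der hder, Function.iterate_succ_apply']

lemma evH_opT (hder : ∀ a b : V, der (a * b) = a * der b + der a * b)
    (h : V) (Q : Polynomial V) :
    evH der h (opT der Q) = opT der (evH der h Q) := by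
  rw [opT_eq, map_neg, evH_opS der hder, opT_eq]

lemma evH_iterS (hder : ∀ a b : V, der (a * b) = a * der b + der a * b)
    (h : V) (n : ℕ) (Q : Polynomial V) :
    evH der h ((opS der)^[n] Q) = (opS der)^[n] (evH der h Q) := by
  induction n generalizing Q with
  | zero => simp
  | succ n ih =>
    rw [Function.iterate_succ_apply', Function.iterate_succ_apply',
      evH_opS der hder, ih]

lemma evH_iterT (hder : ∀ a b : V, der (a * b) = a * der b + der a * b)
    (h : V) (n : ℕ) (Q : Polynomial V) :
    evH der h ((opT der)^[n] Q) = (opT der)^[n] (evH der h Q) := by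
  induction n generalizing Q with
  | zero => simp
  | succ n ih =>
    rw [Function.iterate_succ_apply', Function.iterate_succ_apply',
      evH_opT der hder, ih]

/-- `evH` applied to a full Master-Formula term. -/
lemma evH_term (hder : ∀ a b : V, der (a * b) = a * der b + der a * b)
    (h : V) (Q : Polynomial V) (b a : V) (m n : ℕ) :
    evH der h (C b * (opS der)^[n]
        (Q.sum fun p c => C c * (opS der)^[p] ((opT der)^[m] (C a)))) =
    C b * (opS der)^[n]
        (Q.sum fun p c => C c * (opS der)^[p] ((opT der)^[m] (C (a * h)))) := by
  rw [evH_C_mul, evH_iterS der hder]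
  congr 1
  rw [Polynomial.sum_def, Polynomial.sum_def]
  congr 1
  rw [map_sum]
  refine Finset.sum_congr rfl fun p _ => ?_
  rw [evH_C_mul, evH_iterS der hder, evH_iterT der hder, evH_C]

end MFAux2

section MFAux3

open Polynomial Function

set_option linter.unusedSectionVars false

variable {F V : Type*} [Field F] [CharZero F] [CommRing V] [Algebra F V]
variable (der : V →ₗ[F] V)

lemma iterT_neg (n : ℕ) (p : Polynomial V) :
    (opT der)^[n] (-p) = -(opT der)^[n] p := by
  induction n generalizing p with
  | zero => simp
  | succ n ih =>
    simp [Function.iterate_succ_apply', ih, opT_eq, opS_neg]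

lemma C_der_eq (a : V) : (C (der a) : Polynomial V) = -opT der (C a) - X * C a := by
  simp only [opT, dCoeff_C]
  ring

lemma C_der_mul (hder : ∀ a b : V, der (a * b) = a * der b + der a * b)
    (c : V) (y : Polynomial V) :
    C (der c) * y = opS der (C c * y) - C c * opS der y := by
  rw [opS_C_mul der hder]
  ring

/-- wrapped term: `C b * S^[n] (Q(λ+∂) x)` behaves additively in `x`. -/
lemma termG_zero (Q : Polynomial V) (b : V) (n : ℕ) :
    C b * (opS der)^[n] (Q.sum fun p c => C c * (opS der)^[p] (0 : Polynomial V)) = 0 := by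
  rw [innerSum_zero, iterS_zero, mul_zero]

lemma termG_add (Q : Polynomial V) (b : V) (n : ℕ) (x y : Polynomial V) :
    C b * (opS der)^[n] (Q.sum fun p c => C c * (opS der)^[p] (x + y)) =
      C b * (opS der)^[n] (Q.sum fun p c => C c * (opS der)^[p] x) +
      C b * (opS der)^[n] (Q.sum fun p c => C c * (opS der)^[p] y) := by
  rw [innerSum_add, iterS_add, mul_add]

lemma termG_neg (Q : Polynomial V) (b : V) (n : ℕ) (x : Polynomial V) :
    C b * (opS der)^[n] (Q.sum fun p c => C c * (opS der)^[p] (-x)) =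
      -(C b * (opS der)^[n] (Q.sum fun p c => C c * (opS der)^[p] x)) := by
  rw [innerSum_neg, iterS_neg, mul_neg]

lemma termG_X_mul (Q : Polynomial V) (b : V) (n : ℕ) (x : Polynomial V) :
    C b * (opS der)^[n] (Q.sum fun p c => C c * (opS der)^[p] (X * x)) =
      X * (C b * (opS der)^[n] (Q.sum fun p c => C c * (opS der)^[p] x)) := by
  rw [innerSum_X_mul, iterS_X_mul]
  ring

lemma exists_bound {ℓ : ℕ} (Dp : Fin ℓ → ℕ → (V →ₗ[F] V)) (f : V)
    (hf : {p : Fin ℓ × ℕ | Dp p.1 p.2 f ≠ 0}.Finite) :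
    ∃ N, ∀ i m, N ≤ m → Dp i m f = 0 := by
  refine ⟨hf.toFinset.sup Prod.snd + 1, fun i m hm => ?_⟩
  by_contra hne
  have hmem : (i, m) ∈ hf.toFinset := hf.mem_toFinset.mpr hne
  have := Finset.le_sup (f := Prod.snd) hmem
  omega

lemma mf_eq_sum {ℓ : ℕ} (Dp : Fin ℓ → ℕ → (V →ₗ[F] V))
    (H : Fin ℓ → Fin ℓ → Polynomial V) (f g : V) (N : ℕ)
    (hf : ∀ i m, N ≤ m → Dp i m f = 0) (hg : ∀ j n, N ≤ n → Dp j n g = 0) :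
    masterFormula der Dp H f g = ∑ i : Fin ℓ, ∑ j : Fin ℓ,
      ∑ m ∈ Finset.range N, ∑ n ∈ Finset.range N,
        C (Dp j n g) * (opS der)^[n] ((H j i).sum fun p c =>
          C c * (opS der)^[p] ((opT der)^[m] (C (Dp i m f)))) := by
  rw [masterFormula, finsum_eq_sum_of_fintype]
  refine Finset.sum_congr rfl fun i _ => ?_
  rw [finsum_eq_sum_of_fintype]
  refine Finset.sum_congr rfl fun j _ => ?_
  have hn : ∀ m, (∑ᶠ (n : ℕ), C (Dp j n g) * (opS der)^[n] ((H j i).sum fun p c =>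
      C c * (opS der)^[p] ((opT der)^[m] (C (Dp i m f))))) =
      ∑ n ∈ Finset.range N, C (Dp j n g) * (opS der)^[n] ((H j i).sum fun p c =>
      C c * (opS der)^[p] ((opT der)^[m] (C (Dp i m f)))) := by
    intro m
    refine finsum_eq_sum_of_support_subset _ fun n hn => ?_
    simp only [Function.mem_support] at hn
    by_contra hcon
    apply hn
    rw [hg j n (by simpa using hcon), map_zero, zero_mul]
  rw [finsum_congr hn]
  refine finsum_eq_sum_of_support_subset _ fun m hm => ?_
  simp only [Function.mem_support] at hm
  by_contra hcon
  apply hm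
  refine Finset.sum_eq_zero fun n _ => ?_
  rw [hf i m (by simpa using hcon), map_zero, iterT_zero, innerSum_zero,
    iterS_zero, mul_zero]

end MFAux3

/-- Let `V` be an algebra of differential functions in the
variables `u_1, …, u_ℓ` and `H_{ij}(λ) ∈ F[λ] ⊗ V`.  The `λ`-bracket defined
by the Master Formula satisfies the sesquilinearity axioms, the left and right
Leibniz rules, and `{u_i λ u_j} = H_{ji}(λ)`. -/
theorem master_formula_lambda_bracket
    (F V : Type*) [Field F] [CharZero F] [CommRing V] [Algebra F V] (ℓ : ℕ)
    (der : V →ₗ[F] V)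
    (hder : ∀ a b : V, der (a * b) = a * der b + der a * b)
    (Dp : Fin ℓ → ℕ → (V →ₗ[F] V))
    (hDleib : ∀ i n (a b : V), Dp i n (a * b) = a * Dp i n b + Dp i n a * b)
    (hDfin : ∀ f : V, {p : Fin ℓ × ℕ | Dp p.1 p.2 f ≠ 0}.Finite)
    (hDcomm : ∀ i n j m (f : V), Dp i n (Dp j m f) = Dp j m (Dp i n f))
    (hcomm0 : ∀ i (f : V), Dp i 0 (der f) = der (Dp i 0 f))
    (hcomm : ∀ i n (f : V),
      Dp i (n + 1) (der f) = der (Dp i (n + 1) f) + Dp i n f)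
    (u : Fin ℓ → V)
    (hu : ∀ (i j : Fin ℓ) (n : ℕ),
      Dp j n (u i) = if j = i ∧ n = 0 then 1 else 0)
    (H : Fin ℓ → Fin ℓ → Polynomial V) :
    -- first sesquilinearity axiom {∂f_λ g} = -λ{f_λ g}
    (∀ f g : V, masterFormula der Dp H (der f) g =
      -(Polynomial.X * masterFormula der Dp H f g)) ∧
    -- second sesquilinearity axiom {f_λ ∂g} = (λ+∂){f_λ g}
    (∀ f g : V, masterFormula der Dp H f (der g) =
      opS der (masterFormula der Dp H f g)) ∧
    -- left Leibniz rule {f_λ gh} = {f_λ g}h + {f_λ h}g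
    (∀ f g h : V, masterFormula der Dp H f (g * h) =
      masterFormula der Dp H f g * Polynomial.C h +
      masterFormula der Dp H f h * Polynomial.C g) ∧
    -- right Leibniz rule {fh_λ g} = {f_{λ+∂} g}→h + {h_{λ+∂} g}→f
    (∀ f g h : V, masterFormula der Dp H (f * h) g =
      (masterFormula der Dp H f g).sum
        (fun n c => Polynomial.C c * (opS der)^[n] (Polynomial.C h)) +
      (masterFormula der Dp H h g).sum
        (fun n c => Polynomial.C c * (opS der)^[n] (Polynomial.C f))) ∧
    -- values on generators: {u_i λ u_j} = H j i
    (∀ i j : Fin ℓ, masterFormula der Dp H (u i) (u j) = H j i) := by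
  have bound : ∀ f : V, ∃ N, ∀ i m, N ≤ m → Dp i m f = 0 :=
    fun f => exists_bound Dp f (hDfin f)
  refine ⟨?_, ?_, ?_, ?_, ?_⟩
  · -- first sesquilinearity
    intro f g
    obtain ⟨N1, h1⟩ := bound f
    obtain ⟨N2, h2⟩ := bound g
    set M := max N1 N2 with hM
    have hf : ∀ i m, M + 1 ≤ m → Dp i m f = 0 := fun i m hm => h1 i m (by omega)
    have hg : ∀ j n, M + 1 ≤ n → Dp j n g = 0 := fun j n hn => h2 j n (by omega)
    have hdf : ∀ i m, M + 1 ≤ m → Dp i m (der f) = 0 := by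
      intro i m hm
      obtain ⟨k, rfl⟩ : ∃ k, m = k + 1 := ⟨m - 1, by omega⟩
      rw [hcomm, h1 i (k + 1) (by omega), h1 i k (by omega), map_zero, add_zero]
    rw [mf_eq_sum der Dp H (der f) g (M + 1) hdf hg,
      mf_eq_sum der Dp H f g (M + 1) hf hg]
    simp only [Finset.mul_sum, ← Finset.sum_neg_distrib]
    refine Finset.sum_congr rfl fun i _ => ?_
    refine Finset.sum_congr rfl fun j _ => ?_
    conv_lhs => rw [Finset.sum_comm]
    conv_rhs => rw [Finset.sum_comm]
    refine Finset.sum_congr rfl fun n _ => ?_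
    set bb : ℕ → V := fun m => if m = 0 then 0 else Dp i (m - 1) f with hbbdef
    have hbb : ∀ m, bb (m + 1) = Dp i m f := fun m => by simp [hbbdef]
    have hsplit : ∀ m, Dp i m (der f) = der (Dp i m f) + bb m := by
      intro m
      cases m with
      | zero => simp [hbbdef, hcomm0 i f]
      | succ k => simp [hbbdef, hcomm i k f]
    have key : ∀ m,
        C (Dp j n g) * (opS der)^[n] ((H j i).sum fun p c => C c * (opS der)^[p] ((opT der)^[m] (C (Dp i m (der f))))) =
        -(X * (C (Dp j n g) * (opS der)^[n] ((H j i).sum fun p c => C c * (opS der)^[p] ((opT der)^[m] (C (Dp i m f)))))) +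
        ((C (Dp j n g) * (opS der)^[n] ((H j i).sum fun p c => C c * (opS der)^[p] ((opT der)^[m] (C (bb m))))) -
         (C (Dp j n g) * (opS der)^[n] ((H j i).sum fun p c => C c * (opS der)^[p] ((opT der)^[m + 1] (C (Dp i m f)))))) := by
      intro m
      have e1 : (C (Dp i m (der f)) : Polynomial V) =
          -(opT der (C (Dp i m f))) + (-(X * C (Dp i m f)) + C (bb m)) := by
        rw [hsplit m, C_add, C_der_eq]
        ring
      rw [e1]
      simp only [iterT_add der, iterT_neg der, iterT_X_mul der,
        ← Function.iterate_succ_apply (opT der), termG_add der, termG_neg der,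
        termG_X_mul der]
      abel
    rw [Finset.sum_congr rfl fun m _ => key m, Finset.sum_add_distrib,
      Finset.sum_sub_distrib]
    have hB' : (∑ m ∈ Finset.range (M + 1), (C (Dp j n g) * (opS der)^[n] ((H j i).sum fun p c => C c * (opS der)^[p] ((opT der)^[m] (C (bb m)))))) =
        ∑ m ∈ Finset.range M, (C (Dp j n g) * (opS der)^[n] ((H j i).sum fun p c => C c * (opS der)^[p] ((opT der)^[m + 1] (C (Dp i m f))))) := by
      rw [Finset.sum_range_succ']
      have h0 : (C (Dp j n g) * (opS der)^[n] ((H j i).sum fun p c => C c * (opS der)^[p] ((opT der)^[0] (C (bb 0))))) = 0 := by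
        have : bb 0 = 0 := by simp [hbbdef]
        rw [this, map_zero, iterT_zero, innerSum_zero, iterS_zero, mul_zero]
      rw [h0, add_zero]
      refine Finset.sum_congr rfl fun m _ => ?_
      rw [hbb m]
    have hB : (∑ m ∈ Finset.range (M + 1), (C (Dp j n g) * (opS der)^[n] ((H j i).sum fun p c => C c * (opS der)^[p] ((opT der)^[m + 1] (C (Dp i m f)))))) =
        ∑ m ∈ Finset.range M, (C (Dp j n g) * (opS der)^[n] ((H j i).sum fun p c => C c * (opS der)^[p] ((opT der)^[m + 1] (C (Dp i m f))))) := by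
      rw [Finset.sum_range_succ]
      have h0 : (C (Dp j n g) * (opS der)^[n] ((H j i).sum fun p c => C c * (opS der)^[p] ((opT der)^[M + 1] (C (Dp i M f))))) = 0 := by
        rw [h1 i M (by omega), map_zero, iterT_zero, innerSum_zero, iterS_zero,
          mul_zero]
      rw [h0, add_zero]
    rw [hB', hB, sub_self, add_zero]
  · -- second sesquilinearity
    intro f g
    obtain ⟨N1, h1⟩ := bound f
    obtain ⟨N2, h2⟩ := bound g
    set M := max N1 N2 with hM
    have hf : ∀ i m, M + 1 ≤ m → Dp i m f = 0 := fun i m hm => h1 i m (by omega)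
    have hg : ∀ j n, M + 1 ≤ n → Dp j n g = 0 := fun j n hn => h2 j n (by omega)
    have hdg : ∀ j n, M + 1 ≤ n → Dp j n (der g) = 0 := by
      intro j n hn
      obtain ⟨k, rfl⟩ : ∃ k, n = k + 1 := ⟨n - 1, by omega⟩
      rw [hcomm, h2 j (k + 1) (by omega), h2 j k (by omega), map_zero, add_zero]
    rw [mf_eq_sum der Dp H f (der g) (M + 1) hf hdg,
      mf_eq_sum der Dp H f g (M + 1) hf hg, opS_eq_hom der,
      map_sum (opSHom der) _ Finset.univ]
    refine Finset.sum_congr rfl fun i _ => ?_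
    rw [map_sum (opSHom der) _ Finset.univ]
    refine Finset.sum_congr rfl fun j _ => ?_
    rw [map_sum (opSHom der) _ (Finset.range (M + 1))]
    refine Finset.sum_congr rfl fun m _ => ?_
    rw [map_sum (opSHom der) _ (Finset.range (M + 1))]
    simp only [← opS_eq_hom der]
    set cc : ℕ → V := fun n => if n = 0 then 0 else Dp j (n - 1) g with hccdef
    have hcc : ∀ n, cc (n + 1) = Dp j n g := fun n => by simp [hccdef]
    have hsplit : ∀ n, Dp j n (der g) = der (Dp j n g) + cc n := by
      intro n
      cases n with
      | zero => simp [hccdef, hcomm0 j g]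
      | succ k => simp [hccdef, hcomm j k g]
    have key : ∀ n,
        C (Dp j n (der g)) * (opS der)^[n] ((H j i).sum fun p c => C c * (opS der)^[p] ((opT der)^[m] (C (Dp i m f)))) =
        opS der (C (Dp j n g) * (opS der)^[n] ((H j i).sum fun p c => C c * (opS der)^[p] ((opT der)^[m] (C (Dp i m f))))) +
        ((C (cc n) * (opS der)^[n] ((H j i).sum fun p c => C c * (opS der)^[p] ((opT der)^[m] (C (Dp i m f))))) - (C (Dp j n g) * (opS der)^[n + 1] ((H j i).sum fun p c => C c * (opS der)^[p] ((opT der)^[m] (C (Dp i m f)))))) := by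
      intro n
      rw [hsplit n, C_add, add_mul, C_der_mul der hder,
        ← Function.iterate_succ_apply' (opS der) n]
      ring
    rw [Finset.sum_congr rfl fun n _ => key n, Finset.sum_add_distrib,
      Finset.sum_sub_distrib]
    have hB' : (∑ n ∈ Finset.range (M + 1), (C (cc n) * (opS der)^[n] ((H j i).sum fun p c => C c * (opS der)^[p] ((opT der)^[m] (C (Dp i m f)))))) =
        ∑ n ∈ Finset.range M, (C (Dp j n g) * (opS der)^[n + 1] ((H j i).sum fun p c => C c * (opS der)^[p] ((opT der)^[m] (C (Dp i m f))))) := by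
      rw [Finset.sum_range_succ']
      have h0 : (C (cc 0) * (opS der)^[0] ((H j i).sum fun p c => C c * (opS der)^[p] ((opT der)^[m] (C (Dp i m f))))) = 0 := by
        have : cc 0 = 0 := by simp [hccdef]
        rw [this, map_zero, zero_mul]
      rw [h0, add_zero]
      refine Finset.sum_congr rfl fun n _ => ?_
      rw [hcc n]
    have hB : (∑ n ∈ Finset.range (M + 1), (C (Dp j n g) * (opS der)^[n + 1] ((H j i).sum fun p c => C c * (opS der)^[p] ((opT der)^[m] (C (Dp i m f)))))) =
        ∑ n ∈ Finset.range M, (C (Dp j n g) * (opS der)^[n + 1] ((H j i).sum fun p c => C c * (opS der)^[p] ((opT der)^[m] (C (Dp i m f))))) := by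
      rw [Finset.sum_range_succ]
      have h0 : (C (Dp j M g) * (opS der)^[M + 1] ((H j i).sum fun p c => C c * (opS der)^[p] ((opT der)^[m] (C (Dp i m f))))) = 0 := by
        rw [h2 j M (by omega), map_zero, zero_mul]
      rw [h0, add_zero]
    rw [hB', hB, sub_self, add_zero]
  · -- left Leibniz
    intro f g h
    obtain ⟨N1, h1⟩ := bound f
    obtain ⟨N2, h2⟩ := bound g
    obtain ⟨N3, h3⟩ := bound h
    set N := max N1 (max N2 N3) with hN
    have hf : ∀ i m, N ≤ m → Dp i m f = 0 := fun i m hm => h1 i m (by omega)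
    have hg : ∀ j n, N ≤ n → Dp j n g = 0 := fun j n hn => h2 j n (by omega)
    have hh : ∀ j n, N ≤ n → Dp j n h = 0 := fun j n hn => h3 j n (by omega)
    have hgh : ∀ j n, N ≤ n → Dp j n (g * h) = 0 := fun j n hn => by
      rw [hDleib, hg j n hn, hh j n hn, mul_zero, zero_mul, add_zero]
    rw [mf_eq_sum der Dp H f (g * h) N hf hgh, mf_eq_sum der Dp H f g N hf hg,
      mf_eq_sum der Dp H f h N hf hh]
    simp only [Finset.sum_mul, ← Finset.sum_add_distrib]
    refine Finset.sum_congr rfl fun i _ => ?_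
    refine Finset.sum_congr rfl fun j _ => ?_
    refine Finset.sum_congr rfl fun m _ => ?_
    refine Finset.sum_congr rfl fun n _ => ?_
    rw [hDleib j n g h, C_add, C_mul, C_mul]
    ring
  · -- right Leibniz
    intro f g h
    obtain ⟨N1, h1⟩ := bound f
    obtain ⟨N2, h2⟩ := bound g
    obtain ⟨N3, h3⟩ := bound h
    set N := max N1 (max N2 N3) with hN
    have hf : ∀ i m, N ≤ m → Dp i m f = 0 := fun i m hm => h1 i m (by omega)
    have hg : ∀ j n, N ≤ n → Dp j n g = 0 := fun j n hn => h2 j n (by omega)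
    have hh : ∀ i m, N ≤ m → Dp i m h = 0 := fun i m hm => h3 i m (by omega)
    have hfh : ∀ i m, N ≤ m → Dp i m (f * h) = 0 := fun i m hm => by
      rw [hDleib, hf i m hm, hh i m hm, mul_zero, zero_mul, add_zero]
    rw [mf_eq_sum der Dp H (f * h) g N hfh hg, mf_eq_sum der Dp H f g N hf hg,
      mf_eq_sum der Dp H h g N hh hg, ← evH_apply, ← evH_apply]
    simp only [map_sum, ← Finset.sum_add_distrib]
    refine Finset.sum_congr rfl fun i _ => ?_
    refine Finset.sum_congr rfl fun j _ => ?_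
    refine Finset.sum_congr rfl fun m _ => ?_
    refine Finset.sum_congr rfl fun n _ => ?_
    rw [evH_term der hder, evH_term der hder, hDleib i m f h, mul_comm f (Dp i m h),
      C_add, iterT_add der, termG_add]
    exact add_comm _ _
  · -- generators
    intro i j
    have hden : ∀ (a : Fin ℓ) (i' : Fin ℓ) (m : ℕ), 1 ≤ m → Dp i' m (u a) = 0 := by
      intro a i' m hm
      rw [hu]
      simp [Nat.ne_zero_of_lt hm]
    rw [mf_eq_sum der Dp H (u i) (u j) 1 (hden i) (hden j)]
    simp only [Finset.sum_range_one]
    rw [Finset.sum_eq_single i]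
    · rw [Finset.sum_eq_single j]
      · rw [hu, hu]
        simp only [and_self, if_true]
        rw [Function.iterate_zero_apply, Function.iterate_zero_apply, map_one, one_mul]
        have : ((H j i).sum fun p c => C c * (opS der)^[p] ((C (1:V)))) = H j i := by
          simp only [iterS_C_one der hder]
          exact Polynomial.sum_C_mul_X_pow_eq (H j i)
        simpa using this
      · intro b _ hb
        rw [hu]
        simp [hb]
      · intro hcon; exact absurd (Finset.mem_univ j) hcon
    · intro b _ hb
      refine Finset.sum_eq_zero fun j' _ => ?_
      rw [hu i b 0]
      simp only [hb, false_and, if_false, map_zero, Function.iterate_zero_apply]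
      rw [innerSum_zero]
      simp
    · intro hcon; exact absurd (Finset.mem_univ i) hcon
end
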